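/- arXiv:0902.3006 — 2 statements merged into one kernel-verified Lean document; each statement's English description precedes it below -/
import Mathlib

section
/- Let $d=1$, $b\ge p\ge 1$, and define $u(x)=\int_0^\infty e^{-t}\int_0^1 p(t,x,y)\,dy\,dt$ where $p(t,x,y)=(2\pi\sigma^2(t))^{-1/2}\exp(-(y-xe^{-bt})^2/(2\sigma^2(t)))$ and $\sigma^2(t)=\int_0^t e^{-2bs}\,ds$. Then there are constants $\varepsilon>0$ and $x_1>0$ such that $u(x)\ge\varepsilon x^{-1/b}$ for all $x\ge x_1$; consequently $u\notin L_p((x_1,\infty))$. -/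
open MeasureTheory Set

/-- Variance of the one-dimensional Ornstein–Uhlenbeck process. -/
noncomputable def ouVar (b t : ℝ) : ℝ := ∫ s in (0:ℝ)..t, Real.exp (-2 * b * s)

/-- Transition density of the Ornstein–Uhlenbeck process `dX = -bX dt + dW`. -/
noncomputable def ouKernel (b t x y : ℝ) : ℝ :=
  (2 * Real.pi * ouVar b t) ^ (-(1:ℝ)/2) *
    Real.exp (-((y - x * Real.exp (-b * t)) ^ 2 / (2 * ouVar b t)))

/-- `u(x) = ∫₀^∞ e^{-t} ∫₀¹ p(t,x,y) dy dt`. -/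
noncomputable def ouResolvent (b x : ℝ) : ℝ :=
  ∫ t in Ioi (0:ℝ), Real.exp (-t) * ∫ y in (0:ℝ)..1, ouKernel b t x y

lemma ouVar_eq {b : ℝ} (hb : b ≠ 0) (t : ℝ) :
    ouVar b t = (1 - Real.exp (-2 * b * t)) / (2 * b) := by
  have h2b : (-2 : ℝ) * b ≠ 0 := by simp [hb]
  have h1 : ouVar b t = ∫ s in (0:ℝ)..t, Real.exp ((-2 * b) * s) := rfl
  rw [h1, intervalIntegral.integral_comp_mul_left (fun x => Real.exp x) h2b]
  rw [integral_exp]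
  field_simp
  rw [smul_eq_mul, mul_zero, neg_zero, Real.exp_zero]
  linear_combination (1 - Real.exp (-(2 * b * t))) * (by field_simp : (2 * b) * (1 / (2 * b)) = 1)

lemma ouVar_pos {b t : ℝ} (hb : 0 < b) (ht : 0 < t) : 0 < ouVar b t := by
  rw [ouVar_eq hb.ne']
  have : Real.exp (-2 * b * t) < 1 := by
    rw [Real.exp_lt_one_iff]; nlinarith
  apply div_pos <;> linarith

lemma ouVar_le {b : ℝ} (hb : 0 < b) (t : ℝ) : ouVar b t ≤ 1 / (2 * b) := by
  rw [ouVar_eq hb.ne']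
  have := Real.exp_pos (-2 * b * t)
  gcongr
  linarith

lemma ouVar_ge {b t : ℝ} (hb : 0 < b) (ht : 1 ≤ t) : ouVar b 1 ≤ ouVar b t := by
  rw [ouVar_eq hb.ne', ouVar_eq hb.ne']
  have : Real.exp (-2 * b * t) ≤ Real.exp (-2 * b * 1) := by
    apply Real.exp_le_exp.mpr; nlinarith
  gcongr

lemma ouKernel_eq_gaussian {b t : ℝ} (hb : 0 < b) (ht : 0 < t) (x y : ℝ) :
    ouKernel b t x y =
      ProbabilityTheory.gaussianPDFReal (x * Real.exp (-b * t)) ⟨ouVar b t, (ouVar_pos hb ht).le⟩ y := by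
  have h2 : (0:ℝ) < 2 * Real.pi * ouVar b t := by
    have := ouVar_pos hb ht; have := Real.pi_pos; positivity
  rw [ouKernel]; unfold ProbabilityTheory.gaussianPDFReal
  show _ = (√(2 * Real.pi * ouVar b t))⁻¹ * Real.exp (-(y - x * Real.exp (-b * t)) ^ 2 / (2 * ouVar b t))
  congr 1
  · rw [Real.sqrt_eq_rpow, ← Real.rpow_neg h2.le]
    norm_num
  · rw [neg_div]

/-- Counterexample: if `b ≥ p ≥ 1` then `u(x) ≥ ε x^{-1/b}` for large `x`, so
`u ∉ L_p` near infinity. -/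
theorem ou_resolvent_not_Lp (p b : ℝ) (hp : 1 ≤ p) (hb : p ≤ b) :
    ∃ ε > (0:ℝ), ∃ x₁ > (0:ℝ),
      (∀ x ≥ x₁, ε * x ^ (-(1:ℝ)/b) ≤ ouResolvent b x) ∧
      ¬ IntegrableOn (fun x => |ouResolvent b x| ^ p) (Ioi x₁) := by
  have hb0 : (0:ℝ) < b := by linarith
  have hπ := Real.pi_pos
  set c : ℝ := ouVar b 1 with hcdef
  have hcpos : 0 < c := ouVar_pos hb0 one_pos
  set c₃ : ℝ := (Real.pi / b) ^ (-(1:ℝ)/2) * Real.exp (-(1/(2*c))) with hc3def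
  have hc3pos : 0 < c₃ := mul_pos (Real.rpow_pos_of_pos (by positivity) _) (Real.exp_pos _)
  set ε : ℝ := c₃ * (1 - Real.exp (-1)) with hεdef
  have he1 : Real.exp (-1:ℝ) < 1 := by
    rw [Real.exp_lt_one_iff]; norm_num
  have hεpos : 0 < ε := mul_pos hc3pos (by linarith)
  have key : ∀ x : ℝ, Real.exp b ≤ x → ε * x ^ (-(1:ℝ)/b) ≤ ouResolvent b x := by
    intro x hx
    have hx0 : 0 < x := lt_of_lt_of_le (Real.exp_pos b) hx
    set T : ℝ := Real.log x / b with hTdef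
    have hT1 : 1 ≤ T := by
      rw [hTdef, le_div_iff₀ hb0, one_mul]
      calc b = Real.log (Real.exp b) := (Real.log_exp b).symm
        _ ≤ Real.log x := Real.log_le_log (Real.exp_pos b) hx
    have hknn : ∀ {t : ℝ}, 0 < t → ∀ y : ℝ, 0 ≤ ouKernel b t x y := by
      intro t ht y
      have hV := ouVar_pos hb0 ht
      have h2 : (0:ℝ) ≤ 2 * Real.pi * ouVar b t := by positivity
      exact mul_nonneg (Real.rpow_nonneg h2 _) (Real.exp_nonneg _)
    have hinner_nonneg : ∀ {t : ℝ}, 0 < t → 0 ≤ ∫ y in (0:ℝ)..1, ouKernel b t x y := by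
      intro t ht
      exact intervalIntegral.integral_nonneg zero_le_one (fun y _ => hknn ht y)
    have hinner_le_one : ∀ {t : ℝ}, 0 < t → (∫ y in (0:ℝ)..1, ouKernel b t x y) ≤ 1 := by
      intro t ht
      have hV := ouVar_pos hb0 ht
      have hv0 : (⟨ouVar b t, hV.le⟩ : NNReal) ≠ 0 := by
        intro h; exact hV.ne' (congrArg NNReal.toReal h)
      rw [intervalIntegral.integral_of_le zero_le_one]
      calc (∫ y in Ioc (0:ℝ) 1, ouKernel b t x y)
          = ∫ y in Ioc (0:ℝ) 1,
              ProbabilityTheory.gaussianPDFReal (x * Real.exp (-b * t)) ⟨ouVar b t, hV.le⟩ y := by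
            apply setIntegral_congr_fun measurableSet_Ioc
            intro y _; exact ouKernel_eq_gaussian hb0 ht x y
        _ ≤ ∫ y, ProbabilityTheory.gaussianPDFReal (x * Real.exp (-b * t)) ⟨ouVar b t, hV.le⟩ y :=
            setIntegral_le_integral (ProbabilityTheory.integrable_gaussianPDFReal _ _)
              (Filter.Eventually.of_forall (ProbabilityTheory.gaussianPDFReal_nonneg _ _))
        _ = 1 := ProbabilityTheory.integral_gaussianPDFReal_eq_one _ hv0
    have hmeas : AEStronglyMeasurable
        (fun t => Real.exp (-t) * ∫ y in (0:ℝ)..1, ouKernel b t x y)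
        (volume.restrict (Ioi (0:ℝ))) := by
      have h1 : Measurable fun q : ℝ × ℝ => ouKernel b q.1 x q.2 := by
        simp only [ouKernel, ouVar_eq hb0.ne']
        fun_prop
      have h2 : StronglyMeasurable fun t : ℝ => ∫ y in Ioc (0:ℝ) 1, ouKernel b t x y :=
        h1.stronglyMeasurable.integral_prod_right'
      have h3 : (fun t : ℝ => Real.exp (-t) * ∫ y in (0:ℝ)..1, ouKernel b t x y)
          = fun t => Real.exp (-t) * ∫ y in Ioc (0:ℝ) 1, ouKernel b t x y := by
        funext t; rw [intervalIntegral.integral_of_le zero_le_one]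
      rw [h3]
      exact ((Real.measurable_exp.comp measurable_neg).stronglyMeasurable.mul h2).aestronglyMeasurable
    have hIntf : IntegrableOn
        (fun t => Real.exp (-t) * ∫ y in (0:ℝ)..1, ouKernel b t x y) (Ioi (0:ℝ)) := by
      apply Integrable.mono' (g := fun t => Real.exp (-t)) ?_ hmeas ?_
      · exact (by simpa using exp_neg_integrableOn_Ioi 0 one_pos : IntegrableOn (fun t : ℝ => Real.exp (-t)) (Ioi 0))
      · filter_upwards [ae_restrict_mem measurableSet_Ioi] with t ht
        rw [Real.norm_eq_abs, abs_of_nonneg (mul_nonneg (Real.exp_nonneg _) (hinner_nonneg ht))]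
        calc Real.exp (-t) * ∫ y in (0:ℝ)..1, ouKernel b t x y
            ≤ Real.exp (-t) * 1 :=
              mul_le_mul_of_nonneg_left (hinner_le_one ht) (Real.exp_nonneg _)
          _ = Real.exp (-t) := mul_one _
    have hkerlow : ∀ t ∈ Icc T (T+1), ∀ y ∈ Icc (0:ℝ) 1, c₃ ≤ ouKernel b t x y := by
      intro t ht y hy
      have ht1 : 1 ≤ t := le_trans hT1 ht.1
      have ht0 : 0 < t := by linarith
      have hV := ouVar_pos hb0 ht0
      have hVle : ouVar b t ≤ 1/(2*b) := ouVar_le hb0 t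
      have hVge : c ≤ ouVar b t := ouVar_ge hb0 ht1
      have hlogx : Real.log x ≤ b * t := by
        have h6 : T * b ≤ t * b := mul_le_mul_of_nonneg_right ht.1 hb0.le
        rw [hTdef] at h6
        calc Real.log x = Real.log x / b * b := by field_simp
          _ ≤ t * b := h6
          _ = b * t := mul_comm _ _
      have hm1 : x * Real.exp (-b * t) ≤ 1 := by
        nth_rewrite 1 [← Real.exp_log hx0]
        rw [← Real.exp_add]
        rw [Real.exp_le_one_iff]
        linarith
      have hm0 : 0 < x * Real.exp (-b * t) := by positivity
      have hsq : (y - x * Real.exp (-b * t))^2 ≤ 1 := by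
        have h1 := hy.1; have h2 := hy.2
        nlinarith [mul_nonneg hy.1 hm0.le,
          mul_nonneg (sub_nonneg.2 hy.2) (sub_nonneg.2 hm1)]
      rw [ouKernel]
      have hb1 : (Real.pi / b) ^ (-(1:ℝ)/2) ≤ (2 * Real.pi * ouVar b t) ^ (-(1:ℝ)/2) := by
        apply Real.rpow_le_rpow_of_nonpos (by positivity) ?_ (by norm_num)
        calc 2 * Real.pi * ouVar b t ≤ 2 * Real.pi * (1/(2*b)) :=
              mul_le_mul_of_nonneg_left hVle (by positivity)
          _ = Real.pi / b := by field_simp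
      have hb2 : Real.exp (-(1/(2*c)))
          ≤ Real.exp (-((y - x * Real.exp (-b * t))^2 / (2 * ouVar b t))) := by
        apply Real.exp_le_exp.mpr
        have h7 : (y - x * Real.exp (-b * t))^2 / (2 * ouVar b t) ≤ 1/(2*c) :=
          div_le_div₀ zero_le_one hsq (by positivity) (by linarith)
        linarith
      calc c₃ = (Real.pi / b) ^ (-(1:ℝ)/2) * Real.exp (-(1/(2*c))) := hc3def
        _ ≤ _ := mul_le_mul hb1 hb2 (Real.exp_pos _).le (Real.rpow_nonneg (by positivity) _)
    have hinner_low : ∀ t ∈ Icc T (T+1), c₃ ≤ ∫ y in (0:ℝ)..1, ouKernel b t x y := by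
      intro t ht
      have h8 : IntervalIntegrable (fun y => ouKernel b t x y) volume 0 1 := by
        apply Continuous.intervalIntegrable
        unfold ouKernel; fun_prop
      calc c₃ = ∫ _ in (0:ℝ)..1, c₃ := by
            rw [intervalIntegral.integral_const]; norm_num
        _ ≤ _ := intervalIntegral.integral_mono_on (μ := volume) zero_le_one
            intervalIntegrable_const h8 (hkerlow t ht)
    have hsub : Icc T (T+1) ⊆ Ioi (0:ℝ) := fun t ht => lt_of_lt_of_le (by linarith) ht.1
    have step1 : (∫ t in Icc T (T+1), Real.exp (-t) * ∫ y in (0:ℝ)..1, ouKernel b t x y)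
        ≤ ouResolvent b x := by
      rw [ouResolvent]
      apply setIntegral_mono_set hIntf ?_ (HasSubset.Subset.eventuallyLE hsub)
      filter_upwards [ae_restrict_mem measurableSet_Ioi] with t ht
      exact mul_nonneg (Real.exp_nonneg _) (hinner_nonneg ht)
    have step2 : (∫ t in Icc T (T+1), Real.exp (-t) * c₃)
        ≤ ∫ t in Icc T (T+1), Real.exp (-t) * ∫ y in (0:ℝ)..1, ouKernel b t x y := by
      apply setIntegral_mono_on ?_ ?_ measurableSet_Icc ?_
      · exact (Continuous.mul (by fun_prop) continuous_const).integrableOn_Icc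
      · exact hIntf.mono_set hsub
      · intro t ht
        exact mul_le_mul_of_nonneg_left (hinner_low t ht) (Real.exp_nonneg _)
    have step3 : (∫ t in Icc T (T+1), Real.exp (-t) * c₃) = ε * x ^ (-(1:ℝ)/b) := by
      rw [integral_Icc_eq_integral_Ioc,
        ← intervalIntegral.integral_of_le (by linarith : T ≤ T+1)]
      rw [intervalIntegral.integral_mul_const]
      have h4 : (∫ t in T..(T+1), Real.exp (-t)) = Real.exp (-T) - Real.exp (-(T+1)) := by
        rw [intervalIntegral.integral_comp_neg (fun s => Real.exp s), integral_exp]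
      rw [h4]
      have h5 : x ^ (-(1:ℝ)/b) = Real.exp (-T) := by
        rw [Real.rpow_def_of_pos hx0, hTdef]
        congr 1; field_simp
      have h6 : Real.exp (-(T+1)) = Real.exp (-T) * Real.exp (-1) := by
        rw [← Real.exp_add]; ring_nf
      rw [h5, hεdef, h6]; ring
    linarith [step1, step2, step3.ge, step3.le]
  refine ⟨ε, hεpos, Real.exp b, Real.exp_pos b, fun x hx => key x hx, ?_⟩
  intro hInt
  have h1 : IntegrableOn (fun x : ℝ => x ^ (-1 : ℝ)) (Ioi (Real.exp b)) := by
    apply Integrable.mono' (g := fun x => ε⁻¹ ^ p * |ouResolvent b x| ^ p)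
      (hInt.const_mul _) ?_ ?_
    · exact (measurable_id.pow measurable_const).aestronglyMeasurable
    · filter_upwards [ae_restrict_mem measurableSet_Ioi] with x hx
      have hxe : Real.exp b ≤ x := le_of_lt hx
      have hx0 : 0 < x := lt_of_lt_of_le (Real.exp_pos b) hxe
      have hx1 : 1 ≤ x := by
        have : (1:ℝ) < Real.exp b := by
          rw [← Real.exp_zero]; exact Real.exp_lt_exp.mpr (by linarith)
        linarith [hx]
      have hu : ε * x ^ (-(1:ℝ)/b) ≤ ouResolvent b x := key x hxe
      have hub : ε * x ^ (-(1:ℝ)/b) ≤ |ouResolvent b x| := hu.trans (le_abs_self _)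
      have hp0 : 0 ≤ p := by linarith
      have h3 : (ε * x ^ (-(1:ℝ)/b)) ^ p ≤ |ouResolvent b x| ^ p :=
        Real.rpow_le_rpow (by positivity) hub hp0
      have h4 : (ε * x ^ (-(1:ℝ)/b)) ^ p = ε ^ p * x ^ ((-(1:ℝ)/b) * p) := by
        rw [Real.mul_rpow hεpos.le (Real.rpow_nonneg hx0.le _), ← Real.rpow_mul hx0.le]
      have h5 : x ^ (-1:ℝ) ≤ x ^ ((-(1:ℝ)/b) * p) := by
        apply Real.rpow_le_rpow_of_exponent_le hx1
        rw [neg_div, neg_mul, neg_le_neg_iff]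
        rw [div_mul_eq_mul_div, one_mul, div_le_one hb0]
        exact hb
      have h6 : ‖x ^ (-1:ℝ)‖ = x ^ (-1:ℝ) := by
        rw [Real.norm_eq_abs, abs_of_nonneg (Real.rpow_nonneg hx0.le _)]
      rw [h6]
      calc x ^ (-1:ℝ) ≤ x ^ ((-(1:ℝ)/b) * p) := h5
        _ = ε⁻¹ ^ p * (ε ^ p * x ^ ((-(1:ℝ)/b) * p)) := by
            rw [← mul_assoc, ← Real.mul_rpow (inv_nonneg.2 hεpos.le) hεpos.le,
              inv_mul_cancel₀ hεpos.ne', Real.one_rpow, one_mul]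
        _ ≤ ε⁻¹ ^ p * |ouResolvent b x| ^ p := by
            rw [← h4]
            exact mul_le_mul_of_nonneg_left h3 (Real.rpow_nonneg (by positivity) _)
  have h2 := (integrableOn_Ioi_rpow_iff (Real.exp_pos b)).mp h1
  norm_num at h2
end

section
/- Suppose for the operator $L u = a^{ij}D_{ij}u + b^i D_i u - cu$ (coefficients independent of $t$) the following holds: for each $f\in L_p((0,\infty)\times\mathbb{R}^d)$ of the form $f(t,x)=e^{-t}g(x)$ with $g\in L_p(\mathbb{R}^d)$ and each $\lambda\ge\lambda_0$, the parabolic equation $\partial_t v+Lv-\lambda v=e^{-t}g$ on $(0,\infty)\times\mathbb{R}^d$ has a unique solution $v$ in the class $\mathcal{W}^2_p(0)$, and the class is invariant under time shifts. Then the solution has the form $v(t,x)=e^{-t}u(x)$ with $u\in W^2_p(\mathbb{R}^d)$ solving the elliptic equation $Lu-(\lambda+1)u=g$. -/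
noncomputable abbrev Euc (d : ℕ) := EuclideanSpace ℝ (Fin d)

/-- From parabolic to elliptic: if the parabolic equation
`∂_t v + Lv - λv = e^{-t} g` on `(0,∞) × ℝ^d` has a unique solution in a
time-shift-invariant class `W` (with `L` linear in the scaling sense), then the
solution is of the separated form `v(t,x) = e^{-t} u(x)` with `u` solving the
elliptic equation `Lu - (λ+1)u = g`. -/
theorem parabolic_to_elliptic (d : ℕ) (lam lam0 : ℝ) (hl : lam0 ≤ lam)
    (W : Set (ℝ → Euc d → ℝ))
    (L : (Euc d → ℝ) → (Euc d → ℝ))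
    (hL : ∀ (c : ℝ) (φ : Euc d → ℝ), L (fun x => c * φ x) = fun x => c * L φ x)
    (g : Euc d → ℝ)
    (Sol : (ℝ → Euc d → ℝ) → Prop)
    (hSol : ∀ v, Sol v ↔ ∀ t > (0:ℝ), ∀ x : Euc d,
        deriv (fun s => v s x) t + L (v t) x - lam * v t x = Real.exp (-t) * g x)
    (hshift : ∀ v ∈ W, ∀ s : ℝ, 0 ≤ s → (fun t x => Real.exp s * v (s + t) x) ∈ W)
    (huniq : ∃! v, v ∈ W ∧ Sol v) :
    ∀ v, v ∈ W → Sol v → ∃ u : Euc d → ℝ,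
      (∀ t ≥ (0:ℝ), ∀ x : Euc d, v t x = Real.exp (-t) * u x) ∧
      ∀ x : Euc d, L u x - (lam + 1) * u x = g x := by
  intro v hvW hvS
  -- Step 1: time-shift invariance plus uniqueness gives v(s+t,x) = e^{-s} v(t,x)
  have key : ∀ s : ℝ, 0 ≤ s → (fun t x => Real.exp s * v (s + t) x) = v := by
    intro s hs
    obtain ⟨w, hw, hwuniq⟩ := huniq
    have h1 : (fun t x => Real.exp s * v (s + t) x) ∈ W := hshift v hvW s hs
    have h2 : Sol (fun t x => Real.exp s * v (s + t) x) := by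
      rw [hSol]
      intro t ht x
      have hst : s + t > 0 := by linarith
      have hv := (hSol v).mp hvS (s + t) hst x
      have hd : deriv (fun τ => Real.exp s * v (s + τ) x) t
          = Real.exp s * deriv (fun τ => v τ x) (s + t) := by
        rw [deriv_const_mul_field]
        congr 1
        exact deriv_comp_const_add (fun τ => v τ x) s t
      show deriv (fun τ => Real.exp s * v (s + τ) x) t
          + L (fun x => Real.exp s * v (s + t) x) x
          - lam * (Real.exp s * v (s + t) x) = Real.exp (-t) * g x
      rw [hd, hL]
      have hexp : Real.exp (-t) = Real.exp s * Real.exp (-(s + t)) := by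
        rw [← Real.exp_add]; ring_nf
      rw [hexp]
      linear_combination Real.exp s * hv
    calc (fun t x => Real.exp s * v (s + t) x) = w := hwuniq _ ⟨h1, h2⟩
      _ = v := (hwuniq v ⟨hvW, hvS⟩).symm
  set u : Euc d → ℝ := v 0 with hu
  have hsep : ∀ t ≥ (0:ℝ), ∀ x : Euc d, v t x = Real.exp (-t) * u x := by
    intro t ht x
    have h := congrFun (congrFun (key t ht) 0) x
    simp only [add_zero] at h
    have : Real.exp (-t) * (Real.exp t * v t x) = Real.exp (-t) * u x := by
      rw [h]
    rwa [← mul_assoc, ← Real.exp_add, neg_add_cancel, Real.exp_zero, one_mul] at this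
  refine ⟨u, hsep, ?_⟩
  intro x
  have heq := (hSol v).mp hvS 1 one_pos x
  have hvfun : v 1 = fun x => Real.exp (-1) * u x :=
    funext fun x => hsep 1 (by norm_num) x
  have hev : (fun s => v s x) =ᶠ[nhds (1:ℝ)] fun s => Real.exp (-s) * u x := by
    filter_upwards [Ioi_mem_nhds (by norm_num : (0:ℝ) < 1)] with s hs
    exact hsep s hs.le x
  have hder : HasDerivAt (fun s : ℝ => Real.exp (-s) * u x) (-Real.exp (-1) * u x) 1 := by
    have h1 : HasDerivAt (fun s : ℝ => Real.exp (-s)) (-Real.exp (-1)) 1 := by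
      simpa [Function.comp_def] using (Real.hasDerivAt_exp (-1)).comp 1 (hasDerivAt_neg 1)
    simpa using h1.mul_const (u x)
  have hderiv : deriv (fun s => v s x) 1 = -Real.exp (-1) * u x := by
    rw [hev.deriv_eq, hder.deriv]
  rw [hvfun, hderiv, hL] at heq
  have h2 : Real.exp (-1) * (L u x - (lam + 1) * u x) = Real.exp (-1) * g x := by
    linear_combination heq
  exact mul_left_cancel₀ (Real.exp_pos (-1)).ne' h2
end
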